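/- Let h ≥ 2, let φ = c_1x_1 + ... + c_hx_h be a linear form with nonzero integer coefficients, and let q be a prime such that gcd(q^h − 1, c_i) = 1 for all i ∈ {1, ..., h}. Then there exists an h-tuple 𝒜 = (A_1, ..., A_h) of sets of integers with A_i ⊆ {1, 2, ..., q^h − 2} and |A_i| = q for all i ∈ {1, ..., h} such that 𝒜 is a φ-Sidon system of multiplicity h!. Equivalently, F_{φ,h!}(q^h − 2) ≥ q. -/

import Mathlib

open Polynomial

/-- `Fphi h c g n` is the largest integer `q` such that there exists a `φ`-Sidon system
`𝒜 = (A 0, …, A (h-1))` of multiplicity `g` (for `φ = ∑ i, c i • x i`) with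
`A i ⊆ [1, n]` and `|A i| = q` for all `i`. -/
noncomputable def Fphi (h : ℕ) (c : Fin h → ℤ) (g n : ℕ) : ℕ :=
  sSup {q | ∃ A : Fin h → Finset ℤ,
    (∀ i, A i ⊆ Finset.Icc 1 (n : ℤ)) ∧ (∀ i, (A i).card = q) ∧
    ∀ m : ℤ, ((Fintype.piFinset A).filter (fun v => ∑ i, c i * v i = m)).card ≤ g}

/-- If all elements of a finset of tuples have the same multiset of values, then
its cardinality is at most `n!`. -/
lemma aux_card_le_factorial {n : ℕ} {α : Type*} [LinearOrder α] (S : Finset (Fin n → α))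
    (hS : ∀ s ∈ S, ∀ s' ∈ S, (List.ofFn s : Multiset α) = (List.ofFn s' : Multiset α)) :
    S.card ≤ n.factorial := by
  classical
  have key : ∀ s ∈ S, ∀ s' ∈ S, Tuple.sort s = Tuple.sort s' → s = s' := by
    intro s hs s' hs' hsort
    have hperm : (List.ofFn (s ∘ Tuple.sort s)).Perm (List.ofFn (s' ∘ Tuple.sort s')) :=
      ((Equiv.Perm.ofFn_comp_perm _ s).trans
        (Multiset.coe_eq_coe.mp (hS s hs s' hs'))).trans
        (Equiv.Perm.ofFn_comp_perm _ s').symm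
    have heq : s ∘ Tuple.sort s = s' ∘ Tuple.sort s' :=
      List.ofFn_injective (List.Perm.eq_of_sortedLE
        (Tuple.monotone_sort s).sortedLE_ofFn (Tuple.monotone_sort s').sortedLE_ofFn hperm)
    rw [hsort] at heq
    funext i
    simpa using congrFun heq ((Tuple.sort s')⁻¹ i)
  calc S.card ≤ (Finset.univ : Finset (Equiv.Perm (Fin n))).card := by
        refine Finset.card_le_card_of_injOn (fun s => Tuple.sort s) (fun _ _ => Finset.mem_univ _) ?_
        intro s hs s' hs' he
        exact key s hs s' hs' he
    _ = n.factorial := by rw [Finset.card_univ, Fintype.card_perm, Fintype.card_fin]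

/-- If `θ` is annihilated only by polynomials of degree `≥ h` (other than 0), then two
multisets of size `h` whose associated products of linear factors evaluated at `θ` agree
must be equal. -/
lemma aux_multiset_eq {K L : Type*} [Field K] [Field L] [Algebra K L] {θ : L} {h : ℕ}
    (hann : ∀ p : K[X], aeval θ p = 0 → p.natDegree < h → p = 0)
    (M M' : Multiset K) (hM : Multiset.card M = h) (hM' : Multiset.card M' = h)
    (hp : (M.map (fun s => θ - algebraMap K L s)).prod
        = (M'.map (fun s => θ - algebraMap K L s)).prod) :
    M = M' := by
  set P : K[X] := (M.map fun a => X - C a).prod with hP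
  set P' : K[X] := (M'.map fun a => X - C a).prod with hP'
  have hPm : P.Monic := monic_multiset_prod_of_monic _ _ (fun a _ => monic_X_sub_C a)
  have hP'm : P'.Monic := monic_multiset_prod_of_monic _ _ (fun a _ => monic_X_sub_C a)
  have hdeg : P.natDegree = h := by
    rw [hP, natDegree_multiset_prod_X_sub_C_eq_card, hM]
  have hdeg' : P'.natDegree = h := by
    rw [hP', natDegree_multiset_prod_X_sub_C_eq_card, hM']
  have heval : ∀ (Mm : Multiset K), aeval θ ((Mm.map fun a => X - C a).prod)
      = (Mm.map (fun s => θ - algebraMap K L s)).prod := by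
    intro Mm
    rw [map_multiset_prod, Multiset.map_map]
    congr 1
    apply Multiset.map_congr rfl
    intro a _
    simp
  have haev : aeval θ (P - P') = 0 := by
    rw [map_sub, hP, hP', heval, heval, hp, sub_self]
  by_contra hne
  have hPP' : P ≠ P' := by
    intro e
    apply hne
    have := congrArg Polynomial.roots e
    rwa [hP, hP', roots_multiset_prod_X_sub_C, roots_multiset_prod_X_sub_C] at this
  have hsub : P - P' ≠ 0 := sub_ne_zero.mpr hPP'
  have hdlt : (P - P').natDegree < h := by
    have hdd : (P - P').degree < P.degree := by
      refine degree_sub_lt ?_ hPm.ne_zero ?_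
      · rw [Polynomial.degree_eq_natDegree hPm.ne_zero, Polynomial.degree_eq_natDegree hP'm.ne_zero, hdeg, hdeg']
      · rw [hPm.leadingCoeff, hP'm.leadingCoeff]
    have := natDegree_lt_natDegree hsub hdd
    omega
  exact hsub (hann _ haev hdlt)

theorem stmt_14 (h : ℕ) (hh : 2 ≤ h) (c : Fin h → ℤ) (hc : ∀ i, c i ≠ 0)
    (q : ℕ) (hq : q.Prime) (hqc : ∀ i, Int.gcd ((q : ℤ) ^ h - 1) (c i) = 1) :
    (∃ A : Fin h → Finset ℤ,
      (∀ i, A i ⊆ Finset.Icc 1 ((q : ℤ) ^ h - 2)) ∧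
      (∀ i, (A i).card = q) ∧
      (∀ m : ℤ, ((Fintype.piFinset A).filter (fun v => ∑ i, c i * v i = m)).card ≤
        Nat.factorial h)) ∧
    q ≤ Fphi h c (Nat.factorial h) (q ^ h - 2) := by
  classical
  haveI : Fact q.Prime := ⟨hq⟩
  haveI : NeZero q := ⟨hq.pos.ne'⟩
  have hq2 : 2 ≤ q := hq.two_le
  have hqq : q + 2 ≤ q ^ 2 := by nlinarith
  have hqh : q ^ 2 ≤ q ^ h := Nat.pow_le_pow_right (by omega) hh
  set N : ℕ := q ^ h - 1 with hNdef
  have hN3 : 3 ≤ N := by omega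
  haveI : NeZero N := ⟨by omega⟩
  have hNq : (N : ℤ) = (q : ℤ) ^ h - 1 := by
    have h1 : 1 ≤ q ^ h := by omega
    push_cast [hNdef, Nat.cast_sub h1]
    ring
  -- the finite field
  set F := GaloisField q h with hF
  haveI : Fintype F := Fintype.ofFinite F
  have hcardF : Fintype.card F = q ^ h := by
    rw [← Nat.card_eq_fintype_card]
    exact GaloisField.card q h (by omega)
  obtain ⟨g, hg⟩ := IsCyclic.exists_generator (α := Fˣ)
  have horder : orderOf g = N := by
    rw [orderOf_eq_card_of_forall_mem_zpowers hg, Nat.card_eq_fintype_card,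
      Fintype.card_units, hcardF]
  have hgpow : ∀ x : Fˣ, ∃ n : ℕ, n < N ∧ g ^ n = x := by
    intro x
    obtain ⟨n, hn⟩ := (Submonoid.mem_powers_iff x g).mp
      ((mem_powers_iff_mem_zpowers).mpr (hg x))
    refine ⟨n % N, Nat.mod_lt _ (by omega), ?_⟩
    rw [← hn]
    exact (pow_eq_pow_iff_modEq).mpr (by simpa [horder] using (Nat.mod_modEq n N))
  set θ : F := (g : F) with hθ
  -- θ is not in the prime field
  have hθnot : ∀ s : ZMod q, θ ≠ algebraMap (ZMod q) F s := by
    intro s hs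
    have h1 : θ ^ q = θ := by rw [hs, ← map_pow, ZMod.pow_card]
    have h2 : g ^ q = g ^ 1 := by
      apply Units.ext
      rw [Units.val_pow_eq_pow_val, pow_one]
      exact h1
    have h3 : q ≡ 1 [MOD N] := by
      have := (pow_eq_pow_iff_modEq).mp h2
      rwa [horder] at this
    have h4 : q % N = 1 % N := h3
    rw [Nat.mod_eq_of_lt (by omega), Nat.mod_eq_of_lt (by omega)] at h4
    omega
  -- θ generates F over ZMod q
  have hadj : IntermediateField.adjoin (ZMod q) {θ} = ⊤ := by
    rw [eq_top_iff]
    intro x _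
    by_cases hx : x = 0
    · subst hx; exact zero_mem _
    · obtain ⟨n, _, hn⟩ := hgpow (Units.mk0 x hx)
      have hxe : x = θ ^ n := by
        have := congrArg Units.val hn
        rw [Units.val_pow_eq_pow_val, Units.val_mk0] at this
        exact this.symm
      rw [hxe]
      exact pow_mem (IntermediateField.mem_adjoin_simple_self _ _) n
  have hinteg : IsIntegral (ZMod q) θ := IsIntegral.of_finite (ZMod q) θ
  have hmindeg : (minpoly (ZMod q) θ).natDegree = h := by
    have h1 := IntermediateField.adjoin.finrank hinteg
    have h2 : Module.finrank (ZMod q)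
        (IntermediateField.adjoin (ZMod q) ({θ} : Set F)) = Module.finrank (ZMod q) F := by
      rw [hadj]
      exact (IntermediateField.topEquiv (F := ZMod q) (E := F)).toLinearEquiv.finrank_eq
    rw [← h1, h2, GaloisField.finrank q (by omega : h ≠ 0)]
  have hann : ∀ p : (ZMod q)[X], aeval θ p = 0 → p.natDegree < h → p = 0 := by
    intro p hp hdeg
    by_contra hne
    have := natDegree_le_of_dvd (minpoly.dvd _ θ hp) hne
    omega
  -- the units θ - t
  have hsubne : ∀ t : ZMod q, θ - algebraMap (ZMod q) F t ≠ 0 := by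
    intro t hz
    exact hθnot t (by rwa [sub_eq_zero] at hz)
  set ut : ZMod q → Fˣ := fun t => Units.mk0 _ (hsubne t) with hut
  have hutinj : Function.Injective ut := by
    intro t t' he
    have h1 : θ - algebraMap (ZMod q) F t = θ - algebraMap (ZMod q) F t' := by
      have := congrArg Units.val he
      simpa [hut] using this
    exact (algebraMap (ZMod q) F).injective (sub_right_injective h1)
  have hutne1 : ∀ t, ut t ≠ 1 := by
    intro t h1
    apply hθnot (t + 1)
    have h2 : θ - algebraMap (ZMod q) F t = 1 := by
      have := congrArg Units.val h1
      simpa [hut] using this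
    rw [map_add, map_one]
    linear_combination h2
  -- discrete logarithms
  have hEex : ∀ t : ZMod q, ∃ e : ℕ, 0 < e ∧ e < N ∧ g ^ e = ut t := by
    intro t
    obtain ⟨n, hn1, hn2⟩ := hgpow (ut t)
    refine ⟨n, ?_, hn1, hn2⟩
    rcases Nat.eq_zero_or_pos n with rfl | hpos
    · rw [pow_zero] at hn2
      exact absurd hn2.symm (hutne1 t)
    · exact hpos
  choose E hE1 hE2 hE3 using hEex
  have hEcast : ∀ t : ZMod q, ((E t : ZMod N)) ≠ 0 := by
    intro t he
    have := (ZMod.natCast_eq_zero_iff (E t) N).mp he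
    have := Nat.le_of_dvd (hE1 t) this
    have := hE2 t
    omega
  -- units from the coefficients
  have hunit : ∀ i, IsUnit ((c i : ZMod N)) := by
    intro i
    obtain ⟨a, b, hab⟩ := Int.isCoprime_iff_gcd_eq_one.mpr (hqc i)
    refine IsUnit.of_mul_eq_one ((b : ZMod N)) ?_
    have h0 : (((q:ℤ)^h - 1 : ℤ) : ZMod N) = 0 := by
      rw [← hNq]
      exact_mod_cast ZMod.natCast_self N
    have := congrArg (fun z : ℤ => (z : ZMod N)) hab
    push_cast at this
    rw [show ((q:ZMod N))^h - 1 = (((q:ℤ)^h - 1 : ℤ) : ZMod N) by push_cast; ring, h0] at this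
    rw [mul_comm]
    simpa using this
  set w : Fin h → (ZMod N)ˣ := fun i => (hunit i).unit with hw
  have hwval : ∀ i, (w i : ZMod N) = (c i : ZMod N) := fun i => (hunit i).unit_spec
  -- the elements
  set x : Fin h → ZMod q → ZMod N :=
    fun i t => ((w i)⁻¹ : (ZMod N)ˣ) * ((E t : ℕ) : ZMod N) with hx
  have hxne : ∀ i t, x i t ≠ 0 := by
    intro i t he
    rw [hx] at he
    exact hEcast t ((Units.mul_right_eq_zero _).mp he)
  set f : Fin h → ZMod q → ℕ := fun i t => (x i t).val with hf
  have hf1 : ∀ i t, 1 ≤ f i t := by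
    intro i t
    exact Nat.pos_of_ne_zero (fun e => hxne i t ((ZMod.val_eq_zero _).mp e))
  have hfN : ∀ i t, f i t < N := fun i t => ZMod.val_lt _
  have hfinj : ∀ i, Function.Injective (f i) := by
    intro i t t' he
    have h1 : x i t = x i t' := ZMod.val_injective N he
    rw [hx] at h1
    have h2 : ((E t : ℕ) : ZMod N) = ((E t' : ℕ) : ZMod N) := by
      have := congrArg (fun z => ((w i : (ZMod N)ˣ) : ZMod N) * z) h1
      simpa [← mul_assoc] using this
    have h3 : E t = E t' := by
      have := congrArg ZMod.val h2
      rwa [ZMod.val_natCast_of_lt (hE2 t), ZMod.val_natCast_of_lt (hE2 t')] at this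
    have h4 : ut t = ut t' := by rw [← hE3, ← hE3, h3]
    exact hutinj h4
  -- the sets
  set A : Fin h → Finset ℤ := fun i => Finset.image (fun t => ((f i t : ℕ) : ℤ)) Finset.univ
    with hA
  have hsub : ∀ i, A i ⊆ Finset.Icc 1 ((q : ℤ) ^ h - 2) := by
    intro i z hz
    rw [hA] at hz
    obtain ⟨t, _, rfl⟩ := Finset.mem_image.mp hz
    rw [Finset.mem_Icc]
    constructor
    · exact_mod_cast hf1 i t
    · have h1 : (f i t : ℤ) < (N : ℤ) := by exact_mod_cast hfN i t
      rw [hNq] at h1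
      omega
  have hcard : ∀ i, (A i).card = q := by
    intro i
    rw [hA]
    have : Function.Injective (fun t => ((f i t : ℕ) : ℤ)) := by
      intro t t' he
      apply hfinj i
      have he' : ((f i t : ℕ) : ℤ) = ((f i t' : ℕ) : ℤ) := he
      exact_mod_cast he'
    rw [Finset.card_image_of_injective _ this, Finset.card_univ, ZMod.card]
  -- the group homomorphism from exponents
  have hGadd : ∀ a b : ZMod N, g ^ (a + b).val = g ^ a.val * g ^ b.val := by
    intro a b
    rw [← pow_add]
    refine (pow_eq_pow_iff_modEq).mpr ?_
    rw [horder, ZMod.val_add]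
    exact Nat.mod_modEq _ _
  set Ghom : ZMod N →+ Additive Fˣ :=
    AddMonoidHom.mk' (fun a => Additive.ofMul (g ^ a.val)) (by
      intro a b
      show Additive.ofMul (g ^ (a + b).val) = Additive.ofMul (g ^ a.val) + Additive.ofMul (g ^ b.val)
      rw [← ofMul_mul, hGadd]) with hGhom
  have hGhomval : ∀ a : ZMod N, Ghom a = Additive.ofMul (g ^ a.val) := fun a => rfl
  -- the main bound
  have hbound : ∀ m : ℤ, ((Fintype.piFinset A).filter (fun v => ∑ i, c i * v i = m)).card ≤
      Nat.factorial h := by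
    intro m
    set S := (Fintype.piFinset A).filter (fun v => ∑ i, c i * v i = m) with hS
    -- recover the parameters t from a solution
    set T : (Fin h → ℤ) → Fin h → ZMod q := fun v i =>
      if hex : ∃ t, v i = ((f i t : ℕ) : ℤ) then hex.choose else 0 with hT
    have hTspec : ∀ v ∈ S, ∀ i, v i = ((f i (T v i) : ℕ) : ℤ) := by
      intro v hv i
      have hvp := (Finset.mem_filter.mp hv).1
      have hvi : v i ∈ A i := Fintype.mem_piFinset.mp hvp i
      rw [hA] at hvi
      obtain ⟨t, _, ht⟩ := Finset.mem_image.mp hvi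
      have hex : ∃ t, v i = ((f i t : ℕ) : ℤ) := ⟨t, ht.symm⟩
      rw [hT]
      simp only [dif_pos hex]
      exact hex.choose_spec
    -- each solution gives the same product of units
    have hprod : ∀ v ∈ S, (∏ i, ut (T v i)) = g ^ ((m : ZMod N)).val := by
      intro v hv
      have hsum : ∑ i, ((E (T v i) : ℕ) : ZMod N) = ((m : ℤ) : ZMod N) := by
        have h1 : ((∑ i, c i * v i : ℤ) : ZMod N) = ((m : ℤ) : ZMod N) := by
          rw [(Finset.mem_filter.mp hv).2]
        push_cast at h1
        rw [← h1]
        apply Finset.sum_congr rfl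
        intro i _
        have h2 : ((v i : ℤ) : ZMod N) = x i (T v i) := by
          rw [hTspec v hv i]
          push_cast
          rw [hf]
          simp [ZMod.natCast_val, ZMod.cast_id]
        rw [h2, hx, ← mul_assoc]
        have h3 : ((c i : ℤ) : ZMod N) * (((w i)⁻¹ : (ZMod N)ˣ) : ZMod N) = 1 := by
          rw [← hwval i]
          exact Units.mul_inv _
        rw [h3, one_mul]
      have h4 := congrArg Ghom hsum
      rw [map_sum] at h4
      have h5 := congrArg Additive.toMul h4
      rw [toMul_sum] at h5
      simp only [hGhomval, toMul_ofMul] at h5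
      rw [← h5]
      apply Finset.prod_congr rfl
      intro i _
      rw [ZMod.val_natCast_of_lt (hE2 (T v i)), hE3]
    -- hence the same multiset of parameters
    have hmult : ∀ v ∈ S, ∀ v' ∈ S,
        (List.ofFn (T v) : Multiset (ZMod q)) = (List.ofFn (T v') : Multiset (ZMod q)) := by
      intro v hv v' hv'
      have hpv : ((List.ofFn (T v) : Multiset (ZMod q)).map
          (fun s => θ - algebraMap (ZMod q) F s)).prod
          = ((List.ofFn (T v') : Multiset (ZMod q)).map
          (fun s => θ - algebraMap (ZMod q) F s)).prod := by
        have e1 : ∀ (u : Fin h → ZMod q), ((List.ofFn u : Multiset (ZMod q)).map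
            (fun s => θ - algebraMap (ZMod q) F s)).prod = ∏ i, (θ - algebraMap (ZMod q) F (u i)) := by
          intro u
          rw [show ((List.ofFn u : Multiset (ZMod q)).map (fun s => θ - algebraMap (ZMod q) F s))
            = ((List.ofFn u).map (fun s => θ - algebraMap (ZMod q) F s) : List F) from rfl]
          rw [Multiset.prod_coe, List.map_ofFn, List.prod_ofFn]
          rfl
        have e2 : ∀ (u : Fin h → ZMod q), ((∏ i, ut (u i) : Fˣ) : F)
            = ∏ i, (θ - algebraMap (ZMod q) F (u i)) := by
          intro u
          rw [show ((∏ i, ut (u i) : Fˣ) : F) = (Units.coeHom F) (∏ i, ut (u i)) from rfl,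
            map_prod]
          apply Finset.prod_congr rfl
          intro i _
          rfl
        rw [e1, e1, ← e2, ← e2, hprod v hv, hprod v' hv']
      refine aux_multiset_eq hann _ _ ?_ ?_ hpv
      · simp [Multiset.coe_card]
      · simp [Multiset.coe_card]
    -- inject into tuples of naturals with a fixed multiset
    set Ψ : (Fin h → ℤ) → Fin h → ℕ := fun v i => (T v i).val with hΨ
    have hΨinj : Set.InjOn Ψ S := by
      intro v hv v' hv' he
      funext i
      rw [hTspec v hv i, hTspec v' hv' i]
      have : T v i = T v' i := ZMod.val_injective q (congrFun he i)
      rw [this]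
    have hcardS : S.card = (S.image Ψ).card := (Finset.card_image_of_injOn hΨinj).symm
    rw [hcardS]
    apply aux_card_le_factorial
    intro s hs s' hs'
    obtain ⟨v, hv, rfl⟩ := Finset.mem_image.mp hs
    obtain ⟨v', hv', rfl⟩ := Finset.mem_image.mp hs'
    have h6 := hmult v hv v' hv'
    have e3 : ∀ (u : Fin h → ZMod q), (List.ofFn (fun i => (u i).val) : Multiset ℕ)
        = (List.ofFn u : Multiset (ZMod q)).map ZMod.val := by
      intro u
      rw [show ((List.ofFn u : Multiset (ZMod q)).map ZMod.val)
        = ((List.ofFn u).map ZMod.val : List ℕ) from rfl, List.map_ofFn]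
      rfl
    rw [hΨ]
    simp only []
    rw [e3, e3, h6]
  refine ⟨⟨A, hsub, hcard, hbound⟩, ?_⟩
  -- the Fphi part
  have hcast : ((q ^ h - 2 : ℕ) : ℤ) = (q:ℤ)^h - 2 := by
    have h1 : 2 ≤ q ^ h := by omega
    push_cast [Nat.cast_sub h1]
    ring
  have hmem : q ∈ {q' | ∃ A' : Fin h → Finset ℤ,
      (∀ i, A' i ⊆ Finset.Icc 1 (((q ^ h - 2 : ℕ) : ℤ))) ∧ (∀ i, (A' i).card = q') ∧
      ∀ m : ℤ, ((Fintype.piFinset A').filter (fun v => ∑ i, c i * v i = m)).card ≤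
        Nat.factorial h} := by
    refine ⟨A, ?_, hcard, hbound⟩
    intro i
    rw [hcast]
    exact hsub i
  apply le_csSup _ hmem
  refine ⟨(Finset.Icc (1:ℤ) (((q ^ h - 2 : ℕ) : ℤ))).card, ?_⟩
  rintro q' ⟨A', hA1, hA2, _⟩
  have i0 : Fin h := ⟨0, by omega⟩
  calc q' = (A' i0).card := (hA2 i0).symm
    _ ≤ _ := Finset.card_le_card (hA1 i0)
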